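/- arXiv:2003.06069 — 3 statements merged into one kernel-verified Lean document; each statement's English description precedes it below -/
import Mathlib

section
/- Let h : ℝ → ℝ satisfy c'(a − b) ≤ h(a) − h(b) for all a ≥ b, with c' > 0. Define argmax-e(x) ∈ ℝⁿ to be the uniform distribution over the indices achieving the maximum of x (i.e., argmax-e(x)_i = 1/m if x_i = max_j x_j where m is the number of maximizers, and 0 otherwise). Then for any x ∈ ℝⁿ, ‖softmax_h(x) − argmax-e(x)‖₂ ≤ 2n·exp(−c'·δ), where δ = max_i x_i − max{x_j : x_j < max_i x_i} (and δ = +∞, so the bound is 0, when all coordinates of x are equal). -/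
open Real Finset

noncomputable def softmaxH {n : ℕ} (h : ℝ → ℝ) (x : EuclideanSpace ℝ (Fin n)) :
    EuclideanSpace ℝ (Fin n) :=
  WithLp.toLp 2 (fun i => Real.exp (h (x i)) / ∑ j, Real.exp (h (x j)))

/-- The maximum entry of `x`. -/
noncomputable def maxVal {n : ℕ} [NeZero n] (x : EuclideanSpace ℝ (Fin n)) : ℝ :=
  Finset.univ.sup' Finset.univ_nonempty x

/-- The set of indices whose entry is strictly below the maximum. -/
noncomputable def subMax {n : ℕ} [NeZero n] (x : EuclideanSpace ℝ (Fin n)) : Finset (Fin n) :=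
  Finset.univ.filter (fun j => x j < maxVal x)

/-- `argmax-e(x)`: the uniform distribution over the maximizing indices of `x`. -/
noncomputable def argmaxE {n : ℕ} [NeZero n] (x : EuclideanSpace ℝ (Fin n)) :
    EuclideanSpace ℝ (Fin n) :=
  WithLp.toLp 2 (fun i =>
    if x i = maxVal x then
      (1 : ℝ) / (Finset.univ.filter (fun j => x j = maxVal x)).card
    else 0)

lemma norm_le_sum_abs' {n : ℕ} (y : EuclideanSpace ℝ (Fin n)) : ‖y‖ ≤ ∑ i, |y i| := by
  rw [EuclideanSpace.norm_eq]
  have h1 : ∑ i, ‖y i‖ ^ 2 ≤ (∑ i, |y i|) ^ 2 := by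
    simpa [Real.norm_eq_abs] using
      Finset.sum_sq_le_sq_sum_of_nonneg (f := fun i => |y i|) (fun i _ => abs_nonneg (y i))
  calc Real.sqrt (∑ i, ‖y i‖ ^ 2) ≤ Real.sqrt ((∑ i, |y i|) ^ 2) := Real.sqrt_le_sqrt h1
    _ = ∑ i, |y i| := Real.sqrt_sq (Finset.sum_nonneg fun i _ => abs_nonneg _)


/-- Approximation of `argmax-e` by `softmax_h`: if `c'(a-b) ≤ h(a) - h(b)` for `a ≥ b`,
then `‖softmax_h(x) - argmax-e(x)‖₂ ≤ 2 n exp(-c' δ)` where `δ` is the action gap;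
when all coordinates are equal (`δ = ∞`) the two maps coincide. -/
theorem stmt_3 {n : ℕ} [NeZero n] (h : ℝ → ℝ) (c' : ℝ) (hc' : 0 < c')
    (hh : ∀ a b : ℝ, b ≤ a → c' * (a - b) ≤ h a - h b)
    (x : EuclideanSpace ℝ (Fin n)) :
    (∀ hne : (subMax x).Nonempty,
        ‖softmaxH h x - argmaxE x‖ ≤
          2 * n * Real.exp (-c' * (maxVal x - (subMax x).sup' hne x))) ∧
    (subMax x = ∅ → softmaxH h x = argmaxE x) := by
  classical
  set M := maxVal x with hMdef
  have hle : ∀ i, x i ≤ M := fun i => Finset.le_sup' x (Finset.mem_univ i)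
  obtain ⟨i₀, -, hi₀⟩ := Finset.exists_mem_eq_sup' (Finset.univ_nonempty (α := Fin n)) x
  set S := Finset.univ.filter (fun j => x j = M) with hSdef
  have hi₀' : x i₀ = M := by rw [hMdef, maxVal]; exact hi₀.symm
  have hi₀S : i₀ ∈ S := by simp [hSdef, hi₀']
  have hSne : S.Nonempty := ⟨i₀, hi₀S⟩
  have hm1 : (1 : ℝ) ≤ S.card := by exact_mod_cast hSne.card_pos
  have hmpos : (0 : ℝ) < S.card := lt_of_lt_of_le one_pos hm1
  set Z := ∑ j, Real.exp (h (x j)) with hZdef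
  have hZpos : 0 < Z := Finset.sum_pos (fun j _ => Real.exp_pos _) Finset.univ_nonempty
  have hsumS : ∑ j ∈ S, Real.exp (h (x j)) = S.card * Real.exp (h M) := by
    rw [Finset.sum_congr rfl (fun j hj => by rw [(Finset.mem_filter.mp hj).2])]
    rw [Finset.sum_const, nsmul_eq_mul]
  have hsubeq : Finset.univ.filter (fun j => ¬ x j = M) = subMax x := by
    rw [subMax]
    apply Finset.filter_congr
    intro j _
    constructor
    · intro hne; exact lt_of_le_of_ne (hle j) hne
    · intro hlt; exact ne_of_lt hlt
  have hsplit : Z = S.card * Real.exp (h M) + ∑ j ∈ subMax x, Real.exp (h (x j)) := by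
    rw [hZdef, ← Finset.sum_filter_add_sum_filter_not Finset.univ (fun j => x j = M), hsumS,
      hsubeq]
  have hZgeM : S.card * Real.exp (h M) ≤ Z := by
    rw [hsplit]
    have := Finset.sum_nonneg (fun j (_ : j ∈ subMax x) => (Real.exp_pos (h (x j))).le)
    linarith
  have hEMleZ : Real.exp (h M) ≤ Z := by
    calc Real.exp (h M) = 1 * Real.exp (h M) := (one_mul _).symm
      _ ≤ S.card * Real.exp (h M) := by
          apply mul_le_mul_of_nonneg_right hm1 (Real.exp_pos _).le
      _ ≤ Z := hZgeM
  constructor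
  · intro hne
    set δ := M - (subMax x).sup' hne x with hδdef
    set ε := Real.exp (-c' * δ) with hεdef
    have hεpos : 0 < ε := Real.exp_pos _
    -- key pointwise bound on sub-max exponentials
    have hkey : ∀ j ∈ subMax x, Real.exp (h (x j)) ≤ ε * Real.exp (h M) := by
      intro j hj
      have hxj : x j ≤ (subMax x).sup' hne x := Finset.le_sup' x hj
      have h1 : c' * (M - x j) ≤ h M - h (x j) := hh M (x j) (hle j)
      have h2 : c' * δ ≤ c' * (M - x j) := by
        apply mul_le_mul_of_nonneg_left _ hc'.le
        rw [hδdef]; linarith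
      rw [hεdef, ← Real.exp_add]
      apply Real.exp_le_exp.mpr
      linarith
    have hsubsum : ∑ j ∈ subMax x, Real.exp (h (x j)) ≤ (subMax x).card * (ε * Real.exp (h M)) := by
      calc ∑ j ∈ subMax x, Real.exp (h (x j)) ≤ ∑ _j ∈ subMax x, ε * Real.exp (h M) :=
            Finset.sum_le_sum hkey
        _ = (subMax x).card * (ε * Real.exp (h M)) := by rw [Finset.sum_const, nsmul_eq_mul]
    -- pointwise bounds on |softmax - argmax|
    have habs : ∀ i, |softmaxH h x i - argmaxE x i| ≤
        if x i = M then (subMax x).card * ε / S.card else ε := by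
      intro i
      by_cases hiM : x i = M
      · rw [if_pos hiM]
        have hsm : softmaxH h x i = Real.exp (h M) / Z := by
          simp [softmaxH, hiM, hZdef]
        have ham : argmaxE x i = 1 / S.card := by
          simp [argmaxE, hiM, ← hMdef, ← hSdef]
        rw [hsm, ham]
        have hnonpos : Real.exp (h M) / Z - 1 / S.card ≤ 0 := by
          rw [sub_nonpos, div_le_div_iff₀ hZpos hmpos]
          linarith [hZgeM]
        rw [abs_of_nonpos hnonpos, neg_sub]
        have key : Z - S.card * Real.exp (h M) ≤ (subMax x).card * ε * Real.exp (h M) := by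
          rw [hsplit]; ring_nf; ring_nf at hsubsum; linarith
        have hZ' : (subMax x).card * ε * Real.exp (h M) ≤ (subMax x).card * ε * Z := by
          apply mul_le_mul_of_nonneg_left hEMleZ (by positivity)
        have h2 : Z - S.card * Real.exp (h M) ≤ (subMax x).card * ε * Z := le_trans key hZ'
        calc 1 / (S.card : ℝ) - Real.exp (h M) / Z
            = (Z - S.card * Real.exp (h M)) / (S.card * Z) := by
              field_simp
          _ ≤ ((subMax x).card * ε * Z) / (S.card * Z) := by gcongr
          _ = (subMax x).card * ε / S.card := by
              rw [mul_comm ((S.card : ℝ)) Z, ← div_div, mul_div_assoc,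
                div_self hZpos.ne', mul_one]
      · simp only [if_neg hiM]
        have ham : argmaxE x i = 0 := by simp [argmaxE, ← hMdef, hiM]
        have hiSub : i ∈ subMax x := by
          simp [subMax, ← hMdef, lt_of_le_of_ne (hle i) hiM]
        have hval : softmaxH h x i = Real.exp (h (x i)) / Z := rfl
        rw [ham, sub_zero, hval, abs_of_nonneg (by positivity)]
        have h1 : Real.exp (h (x i)) ≤ ε * Real.exp (h M) := hkey i hiSub
        have h2 : ε * Real.exp (h M) ≤ ε * Z := mul_le_mul_of_nonneg_left hEMleZ hεpos.le
        rw [div_le_iff₀ hZpos]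
        exact le_trans h1 h2
      -- done
    -- assemble
    have hsub_apply : ∀ i, (softmaxH h x - argmaxE x) i = softmaxH h x i - argmaxE x i :=
      fun i => rfl
    calc ‖softmaxH h x - argmaxE x‖ ≤ ∑ i, |(softmaxH h x - argmaxE x) i| :=
          norm_le_sum_abs' _
      _ = ∑ i, |softmaxH h x i - argmaxE x i| := by
          apply Finset.sum_congr rfl; intro i _; rw [hsub_apply]
      _ ≤ ∑ i, (if x i = M then (subMax x).card * ε / S.card else ε) :=
          Finset.sum_le_sum (fun i _ => habs i)
      _ = ∑ i ∈ S, ((subMax x).card * ε / S.card) + ∑ i ∈ subMax x, ε := by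
          rw [← Finset.sum_filter_add_sum_filter_not Finset.univ (fun j => x j = M)]
          congr 1
          · apply Finset.sum_congr rfl; intro i hi
            rw [if_pos (Finset.mem_filter.mp hi).2]
          · rw [hsubeq]
            apply Finset.sum_congr rfl; intro i hi
            rw [if_neg (ne_of_lt ((Finset.mem_filter.mp hi).2))]
      _ = (subMax x).card * ε + (subMax x).card * ε := by
          rw [Finset.sum_const, Finset.sum_const, nsmul_eq_mul, nsmul_eq_mul]
          field_simp
      _ ≤ 2 * n * ε := by
          have hcard : ((subMax x).card : ℝ) ≤ n := by
            exact_mod_cast le_trans (Finset.card_le_card (Finset.subset_univ _))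
              (le_of_eq (Finset.card_univ.trans (Fintype.card_fin n)))
          nlinarith
  · intro hempty
    have hall : ∀ i, x i = M := by
      intro i
      by_contra hne
      have : i ∈ subMax x := by
        simp [subMax, ← hMdef, lt_of_le_of_ne (hle i) hne]
      rw [hempty] at this
      exact absurd this (Finset.notMem_empty i)
    have hSuniv : S = Finset.univ := by
      apply Finset.eq_univ_of_forall
      intro i; simp [hSdef, hall i]
    ext i
    have hZn : Z = n * Real.exp (h M) := by
      rw [hZdef]
      rw [Finset.sum_congr rfl (fun j _ => by rw [hall j])]
      rw [Finset.sum_const, nsmul_eq_mul]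
      simp
    have hn0 : (0:ℝ) < n := by exact_mod_cast Nat.pos_of_ne_zero (NeZero.ne n)
    show softmaxH h x i = argmaxE x i
    rw [softmaxH]
    simp only [WithLp.ofLp_toLp, argmaxE, ← hMdef, if_pos (hall i), ← hSdef, hSuniv]
    rw [hall i, ← hZdef, hZn]
    rw [Finset.card_univ, Fintype.card_fin]
    rw [div_eq_div_iff (by positivity) hn0.ne']
    ring
end

section
/- Let d ∈ [0,1) and let (ε_k) be a nonnegative summable sequence. Then for every K ≥ 1, Σ_{k=0}^{K−1} d^{K−k}·ε_k ≤ (sup_{k≥0} ε_k)/(1 − d) · d^{⌊(K−1)/2⌋} + Σ_{k=⌈(K−1)/2⌉}^{∞} ε_k. -/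
/-- Geometric-weighted tail bound: for `d ∈ [0,1)` and a summable nonnegative sequence `ε`,
`Σ_{k=0}^{K-1} d^{K-k} ε_k ≤ (sup_k ε_k)/(1-d) · d^⌊(K-1)/2⌋ + Σ_{k ≥ ⌈(K-1)/2⌉} ε_k`.
(For natural `K ≥ 1`, `⌊(K-1)/2⌋ = (K-1)/2` and `⌈(K-1)/2⌉ = K/2` in natural division.) -/
theorem stmt_9 (d : ℝ) (hd0 : 0 ≤ d) (hd1 : d < 1)
    (ε : ℕ → ℝ) (hε : ∀ k, 0 ≤ ε k) (hsum : Summable ε)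
    (K : ℕ) (hK : 1 ≤ K) :
    ∑ k ∈ Finset.range K, d ^ (K - k) * ε k ≤
      (⨆ k, ε k) / (1 - d) * d ^ ((K - 1) / 2) + ∑' k : ℕ, ε (k + K / 2) := by
  set m := K / 2 with hm
  have hmK : m ≤ K := Nat.div_le_self K 2
  have h1d : (0:ℝ) < 1 - d := by linarith
  have hbdd : BddAbove (Set.range ε) := by
    refine ⟨∑' k, ε k, ?_⟩
    rintro _ ⟨k, rfl⟩
    exact Summable.le_tsum hsum k (fun i _ => hε i)
  have hS : ∀ k, ε k ≤ ⨆ k, ε k := fun k => le_ciSup hbdd k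
  have hS0 : 0 ≤ ⨆ k, ε k := le_trans (hε 0) (hS 0)
  rw [← Finset.sum_range_add_sum_Ico _ hmK]
  refine add_le_add ?_ ?_
  · -- head part
    have key : ∀ k ∈ Finset.range m,
        d ^ (K - k) * ε k ≤ (⨆ k, ε k) * (d ^ ((K - 1) / 2) * d ^ (m - 1 - k)) := by
      intro k hk
      rw [Finset.mem_range] at hk
      have hle : (K - 1) / 2 + (m - 1 - k) ≤ K - k := by omega
      have hpow : d ^ (K - k) ≤ d ^ ((K - 1) / 2 + (m - 1 - k)) :=
        pow_le_pow_of_le_one hd0 hd1.le hle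
      rw [pow_add] at hpow
      calc d ^ (K - k) * ε k ≤ (d ^ ((K - 1) / 2) * d ^ (m - 1 - k)) * (⨆ k, ε k) := by
            apply mul_le_mul hpow (hS k) (hε k)
            positivity
        _ = (⨆ k, ε k) * (d ^ ((K - 1) / 2) * d ^ (m - 1 - k)) := by ring
    calc ∑ k ∈ Finset.range m, d ^ (K - k) * ε k
        ≤ ∑ k ∈ Finset.range m, (⨆ k, ε k) * (d ^ ((K - 1) / 2) * d ^ (m - 1 - k)) :=
          Finset.sum_le_sum key
      _ = (⨆ k, ε k) * d ^ ((K - 1) / 2) * ∑ k ∈ Finset.range m, d ^ (m - 1 - k) := by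
          rw [Finset.mul_sum]; apply Finset.sum_congr rfl; intros; ring
      _ = (⨆ k, ε k) * d ^ ((K - 1) / 2) * ∑ k ∈ Finset.range m, d ^ k := by
          rw [Finset.sum_range_reflect (fun k => d ^ k) m]
      _ ≤ (⨆ k, ε k) * d ^ ((K - 1) / 2) * (1 - d)⁻¹ := by
          apply mul_le_mul_of_nonneg_left _ (by positivity)
          have := Summable.sum_le_tsum (Finset.range m) (fun i _ => pow_nonneg hd0 i)
            (summable_geometric_of_lt_one hd0 hd1)
          rwa [tsum_geometric_of_lt_one hd0 hd1] at this
      _ = (⨆ k, ε k) / (1 - d) * d ^ ((K - 1) / 2) := by ring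
  · -- tail part
    have h1 : ∑ k ∈ Finset.Ico m K, d ^ (K - k) * ε k ≤ ∑ k ∈ Finset.Ico m K, ε k := by
      refine Finset.sum_le_sum fun k _ => ?_
      calc d ^ (K - k) * ε k ≤ 1 * ε k := by
            apply mul_le_mul_of_nonneg_right (pow_le_one₀ hd0 hd1.le) (hε k)
        _ = ε k := one_mul _
    have h2 : ∑ k ∈ Finset.Ico m K, ε k = ∑ i ∈ Finset.range (K - m), ε (i + m) := by
      rw [Finset.sum_Ico_eq_sum_range]
      apply Finset.sum_congr rfl
      intros; rw [Nat.add_comm]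
    have hsum' : Summable (fun i => ε (i + m)) := (summable_nat_add_iff m).mpr hsum
    have h3 : ∑ i ∈ Finset.range (K - m), ε (i + m) ≤ ∑' i : ℕ, ε (i + m) :=
      Summable.sum_le_tsum _ (fun i _ => hε _) hsum'
    calc ∑ k ∈ Finset.Ico m K, d ^ (K - k) * ε k ≤ _ := h1
      _ = _ := h2
      _ ≤ _ := h3
end

section
/- Let X be a finite subset of ℝᵏ and n = |X|. For any two vectors x, y ∈ ℝⁿ, viewing softmax_c(x) and softmax_c(y) as probability distributions over X, we have W₁(softmax_c(x), softmax_c(y)) ≤ (diam(X)·√n·c/2)·‖x − y‖₂ ≤ (diam(X)·n·c/2)·‖x − y‖_∞, where softmax_c(x)_i = exp(c·x_i)/Σ_j exp(c·x_j). -/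
open Finset

/-- ℓ₁-Wasserstein distance between two distributions supported on a finite set. -/
noncomputable def W1 {α : Type*} (T : Finset α) (dst : α → α → ℝ) (ν ν' : α → ℝ) : ℝ :=
  sInf { c : ℝ | ∃ M : α → α → ℝ,
    (∀ x y, 0 ≤ M x y) ∧
    (∀ x ∈ T, ∑ y ∈ T, M x y = ν x) ∧
    (∀ y ∈ T, ∑ x ∈ T, M x y = ν' y) ∧
    c = ∑ x ∈ T, ∑ y ∈ T, M x y * dst x y }

/-- Softmax with temperature `c` of a function `x` on the finite set `X`, viewed as a
probability distribution on `X`. -/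
noncomputable def smx {k : ℕ} (X : Finset (EuclideanSpace ℝ (Fin k))) (c : ℝ)
    (x : EuclideanSpace ℝ (Fin k) → ℝ) : EuclideanSpace ℝ (Fin k) → ℝ :=
  fun z => Real.exp (c * x z) / ∑ w ∈ X, Real.exp (c * x w)

lemma W1_le_diam {α : Type*} [DecidableEq α] (T : Finset α) (dst : α → α → ℝ)
    (hd : ∀ u v, 0 ≤ dst u v) (hdiag : ∀ u, dst u u = 0)
    (D : ℝ) (hD : ∀ u ∈ T, ∀ v ∈ T, dst u v ≤ D)
    (ν ν' : α → ℝ) (hν : ∀ z, 0 ≤ ν z) (hν' : ∀ z, 0 ≤ ν' z)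
    (h1 : ∑ z ∈ T, ν z = 1) (h1' : ∑ z ∈ T, ν' z = 1) :
    W1 T dst ν ν' ≤ D / 2 * ∑ z ∈ T, |ν z - ν' z| := by
  classical
  set μ : α → ℝ := fun z => min (ν z) (ν' z) with hμ
  set f : α → ℝ := fun z => ν z - μ z with hf
  set g : α → ℝ := fun z => ν' z - μ z with hg
  have hf0 : ∀ z, 0 ≤ f z := fun z => by simp [hf, hμ, min_le_left]
  have hg0 : ∀ z, 0 ≤ g z := fun z => by simp [hg, hμ, min_le_right]
  have hμ0 : ∀ z, 0 ≤ μ z := fun z => le_min (hν z) (hν' z)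
  set δ : ℝ := ∑ z ∈ T, f z with hδ
  have hδ0 : 0 ≤ δ := Finset.sum_nonneg fun z _ => hf0 z
  have hfg : ∀ z, f z - g z = ν z - ν' z := fun z => by simp [hf, hg]
  have hgsum : ∑ z ∈ T, g z = δ := by
    have : ∑ z ∈ T, f z - ∑ z ∈ T, g z = 0 := by
      rw [← Finset.sum_sub_distrib]
      simp only [hfg]
      rw [Finset.sum_sub_distrib, h1, h1']; ring
    linarith [this]
  have habs : ∀ z, |ν z - ν' z| = f z + g z := by
    intro z
    rcases le_total (ν z) (ν' z) with h | h
    · rw [abs_of_nonpos (by linarith)]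
      simp [hf, hg, hμ, min_eq_left h]
    · rw [abs_of_nonneg (by linarith)]
      simp [hf, hg, hμ, min_eq_right h]
  have hδabs : ∑ z ∈ T, |ν z - ν' z| = 2 * δ := by
    simp only [habs]
    rw [Finset.sum_add_distrib, hgsum, hδ]
    ring
  set M : α → α → ℝ := fun z w => (if z = w then μ z else 0) + f z * g w / δ with hM
  have hM0 : ∀ z w, 0 ≤ M z w := by
    intro z w
    have h2 : 0 ≤ f z * g w / δ := div_nonneg (mul_nonneg (hf0 z) (hg0 w)) hδ0
    by_cases h : z = w
    · simp only [hM, h, if_pos rfl]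
      exact add_nonneg (hμ0 w) (by subst h; exact h2)
    · simp only [hM, if_neg h, zero_add]; exact h2
  have hfz : ∀ z ∈ T, f z * (δ / δ) = f z := by
    intro z hz
    rcases eq_or_ne δ 0 with h | h
    · have hz0 : f z = 0 :=
        (Finset.sum_eq_zero_iff_of_nonneg (fun w _ => hf0 w)).mp (by rw [← hδ]; exact h) z hz
      simp [hz0]
    · rw [div_self h, mul_one]
  have hgz : ∀ z ∈ T, g z * (δ / δ) = g z := by
    intro z hz
    rcases eq_or_ne δ 0 with h | h
    · have hz0 : g z = 0 :=
        (Finset.sum_eq_zero_iff_of_nonneg (fun w _ => hg0 w)).mp (by rw [hgsum]; exact h) z hz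
      simp [hz0]
    · rw [div_self h, mul_one]
  have hrow : ∀ z ∈ T, ∑ w ∈ T, M z w = ν z := by
    intro z hz
    simp only [hM]
    rw [Finset.sum_add_distrib, Finset.sum_ite_eq T z (fun _ => μ z), if_pos hz]
    have h2 : ∑ w ∈ T, f z * g w / δ = f z * (δ / δ) := by
      simp_rw [mul_div_assoc]
      rw [← Finset.mul_sum, ← Finset.sum_div, hgsum]
    rw [h2, hfz z hz]
    simp [hf]
  have hcol : ∀ w ∈ T, ∑ z ∈ T, M z w = ν' w := by
    intro w hw
    simp only [hM]
    rw [Finset.sum_add_distrib, Finset.sum_ite_eq' T w (fun z => μ z), if_pos hw]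
    have h2 : ∑ z ∈ T, f z * g w / δ = g w * (δ / δ) := by
      rw [← Finset.sum_div, ← Finset.sum_mul, ← hδ, mul_comm, mul_div_assoc]
    rw [h2, hgz w hw]
    simp [hg]
  -- the cost
  have hcost : ∑ z ∈ T, ∑ w ∈ T, M z w * dst z w ≤ D / 2 * ∑ z ∈ T, |ν z - ν' z| := by
    rw [hδabs]
    have hsplit : ∀ z ∈ T, ∀ w ∈ T, M z w * dst z w ≤ f z * g w / δ * D := by
      intro z hz w hw
      by_cases h : z = w
      · subst h
        simp only [hM, if_pos rfl, hdiag z, mul_zero]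
        have : 0 ≤ f z * g z / δ := div_nonneg (mul_nonneg (hf0 z) (hg0 z)) hδ0
        have hD0 : 0 ≤ D := le_trans (hd z z) (hD z hz z hz)
        positivity
      · simp only [hM, if_neg h, zero_add]
        exact mul_le_mul_of_nonneg_left (hD z hz w hw)
          (div_nonneg (mul_nonneg (hf0 z) (hg0 w)) hδ0)
    calc ∑ z ∈ T, ∑ w ∈ T, M z w * dst z w
        ≤ ∑ z ∈ T, ∑ w ∈ T, f z * g w / δ * D :=
          Finset.sum_le_sum fun z hz => Finset.sum_le_sum fun w hw => hsplit z hz w hw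
      _ = ∑ z ∈ T, f z * (δ / δ) * D := Finset.sum_congr rfl fun z hz => by
          rw [← Finset.sum_mul]
          congr 1
          simp_rw [mul_div_assoc]
          rw [← Finset.mul_sum, ← Finset.sum_div, hgsum]
      _ = δ * D := by
          rw [← Finset.sum_mul, Finset.sum_congr rfl hfz, ← hδ]
      _ ≤ D / 2 * (2 * δ) := by ring_nf; rfl
  -- conclude
  have hmem : (∑ z ∈ T, ∑ w ∈ T, M z w * dst z w) ∈
      { c : ℝ | ∃ M : α → α → ℝ,
        (∀ x y, 0 ≤ M x y) ∧
        (∀ x ∈ T, ∑ y ∈ T, M x y = ν x) ∧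
        (∀ y ∈ T, ∑ x ∈ T, M x y = ν' y) ∧
        c = ∑ x ∈ T, ∑ y ∈ T, M x y * dst x y } :=
    ⟨M, hM0, hrow, hcol, rfl⟩
  have hbdd : BddBelow { c : ℝ | ∃ M : α → α → ℝ,
        (∀ x y, 0 ≤ M x y) ∧
        (∀ x ∈ T, ∑ y ∈ T, M x y = ν x) ∧
        (∀ y ∈ T, ∑ x ∈ T, M x y = ν' y) ∧
        c = ∑ x ∈ T, ∑ y ∈ T, M x y * dst x y } := by
    refine ⟨0, fun a ha => ?_⟩
    obtain ⟨N, hN0, -, -, rfl⟩ := ha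
    exact Finset.sum_nonneg fun z _ => Finset.sum_nonneg fun w _ =>
      mul_nonneg (hN0 z w) (hd z w)
  exact le_trans (csInf_le hbdd hmem) hcost

lemma smx_l1_lip {k : ℕ} (X : Finset (EuclideanSpace ℝ (Fin k))) (hX : X.Nonempty)
    (c : ℝ) (hc : 0 < c) (x y : EuclideanSpace ℝ (Fin k) → ℝ) (M : ℝ)
    (hM : ∀ z ∈ X, |x z - y z| ≤ M) :
    ∑ z ∈ X, |smx X c x z - smx X c y z| ≤ c * M := by
  classical
  set d : EuclideanSpace ℝ (Fin k) → ℝ := fun z => x z - y z with hd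
  set e : EuclideanSpace ℝ (Fin k) → ℝ → ℝ := fun z t => Real.exp (c * (y z + t * d z)) with he
  set s : EuclideanSpace ℝ (Fin k) → ℝ :=
    fun z => if 0 ≤ smx X c x z - smx X c y z then 1 else -1 with hs
  set S : ℝ → ℝ := fun t => ∑ z ∈ X, e z t with hS
  set N : ℝ → ℝ := fun t => ∑ z ∈ X, s z * e z t with hN
  have hepos : ∀ z t, 0 < e z t := fun z t => Real.exp_pos _
  have hSpos : ∀ t, 0 < S t := fun t => Finset.sum_pos (fun z _ => hepos z t) hX
  have hM0 : 0 ≤ M := le_trans (abs_nonneg _) (hM hX.choose hX.choose_spec)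
  have hE : ∀ z t, HasDerivAt (fun t => e z t) (c * d z * e z t) t := by
    intro z t
    have h1 : HasDerivAt (fun t : ℝ => y z + t * d z) (d z) t := by
      simpa using ((hasDerivAt_id t).mul_const (d z)).const_add (y z)
    have h2 : HasDerivAt (fun t : ℝ => c * (y z + t * d z)) (c * d z) t := h1.const_mul c
    simpa [he, mul_comm] using h2.exp
  have hSd : ∀ t, HasDerivAt S (∑ z ∈ X, c * d z * e z t) t := fun t =>
    HasDerivAt.fun_sum fun z _ => hE z t
  have hNd : ∀ t, HasDerivAt N (∑ z ∈ X, s z * (c * d z * e z t)) t := fun t =>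
    HasDerivAt.fun_sum fun z _ => (hE z t).const_mul (s z)
  set g : ℝ → ℝ := fun t => N t / S t with hg
  set g' : ℝ → ℝ := fun t =>
    ((∑ z ∈ X, s z * (c * d z * e z t)) * S t - N t * ∑ z ∈ X, c * d z * e z t) / S t ^ 2
    with hg'
  have hgd : ∀ t, HasDerivAt g (g' t) t :=
    fun t => (hNd t).div (hSd t) (ne_of_gt (hSpos t))
  have hbound : ∀ t : ℝ, |g' t| ≤ c * M := by
    intro t
    set A : Finset (EuclideanSpace ℝ (Fin k)) :=
      X.filter (fun z => 0 ≤ smx X c x z - smx X c y z) with hA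
    set B : Finset (EuclideanSpace ℝ (Fin k)) :=
      X.filter (fun z => ¬ 0 ≤ smx X c x z - smx X c y z) with hB
    have hsA : ∀ z ∈ A, s z = 1 := fun z hz => by
      simp only [hs]; rw [if_pos (Finset.mem_filter.mp hz).2]
    have hsB : ∀ z ∈ B, s z = -1 := fun z hz => by
      simp only [hs]; rw [if_neg (Finset.mem_filter.mp hz).2]
    set F : EuclideanSpace ℝ (Fin k) → EuclideanSpace ℝ (Fin k) → ℝ :=
      fun z w => e z t * e w t * (d z - d w) with hF
    have hnum : (∑ z ∈ X, s z * (c * d z * e z t)) * S t - N t * ∑ z ∈ X, c * d z * e z t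
        = c * ∑ z ∈ X, ∑ w ∈ X, s z * F z w := by
      rw [Finset.sum_mul, hN, Finset.sum_mul]
      rw [← Finset.sum_sub_distrib, Finset.mul_sum]
      refine Finset.sum_congr rfl fun z hz => ?_
      rw [hS, Finset.mul_sum, Finset.mul_sum, ← Finset.sum_sub_distrib, Finset.mul_sum]
      exact Finset.sum_congr rfl fun w hw => by simp only [hF]; ring
    have hdiagU : ∀ U : Finset (EuclideanSpace ℝ (Fin k)), ∑ z ∈ U, ∑ w ∈ U, F z w = 0 := by
      intro U
      have h1 : ∑ z ∈ U, ∑ w ∈ U, F z w = -∑ z ∈ U, ∑ w ∈ U, F z w := by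
        conv_lhs => rw [Finset.sum_comm]
        rw [← Finset.sum_neg_distrib]
        refine Finset.sum_congr rfl fun w _ => ?_
        rw [← Finset.sum_neg_distrib]
        exact Finset.sum_congr rfl fun z _ => by simp only [hF]; ring
      linarith
    have hanti : ∑ z ∈ B, ∑ w ∈ A, F z w = -∑ z ∈ A, ∑ w ∈ B, F z w := by
      conv_lhs => rw [Finset.sum_comm]
      rw [← Finset.sum_neg_distrib]
      refine Finset.sum_congr rfl fun w _ => ?_
      rw [← Finset.sum_neg_distrib]
      exact Finset.sum_congr rfl fun z _ => by simp only [hF]; ring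
    have hQ : ∑ z ∈ X, ∑ w ∈ X, s z * F z w = 2 * ∑ z ∈ A, ∑ w ∈ B, F z w := by
      have h1 : ∑ z ∈ X, ∑ w ∈ X, s z * F z w
          = (∑ z ∈ A, ∑ w ∈ X, s z * F z w) + ∑ z ∈ B, ∑ w ∈ X, s z * F z w :=
        (Finset.sum_filter_add_sum_filter_not X _ _).symm
      have hsplitw : ∀ z, ∑ w ∈ X, F z w = (∑ w ∈ A, F z w) + ∑ w ∈ B, F z w := fun z =>
        (Finset.sum_filter_add_sum_filter_not X _ _).symm
      have h2 : ∑ z ∈ A, ∑ w ∈ X, s z * F z w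
          = (∑ z ∈ A, ∑ w ∈ A, F z w) + ∑ z ∈ A, ∑ w ∈ B, F z w := by
        rw [← Finset.sum_add_distrib]
        refine Finset.sum_congr rfl fun z hz => ?_
        rw [← Finset.mul_sum, hsA z hz, one_mul, hsplitw z]
      have h3 : ∑ z ∈ B, ∑ w ∈ X, s z * F z w
          = -((∑ z ∈ B, ∑ w ∈ A, F z w) + ∑ z ∈ B, ∑ w ∈ B, F z w) := by
        rw [neg_add, ← Finset.sum_neg_distrib, ← Finset.sum_neg_distrib,
          ← Finset.sum_add_distrib]
        refine Finset.sum_congr rfl fun z hz => ?_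
        rw [← Finset.mul_sum, hsB z hz, hsplitw z]
        ring
      rw [h1, h2, h3, hdiagU A, hdiagU B, hanti]
      ring
    have hEA0 : 0 ≤ ∑ z ∈ A, e z t := Finset.sum_nonneg fun z _ => (hepos z t).le
    have hEB0 : 0 ≤ ∑ z ∈ B, e z t := Finset.sum_nonneg fun z _ => (hepos z t).le
    have hES : (∑ z ∈ A, e z t) + ∑ z ∈ B, e z t = S t :=
      Finset.sum_filter_add_sum_filter_not X _ _
    have hQAB : |∑ z ∈ A, ∑ w ∈ B, F z w|
        ≤ (∑ z ∈ A, e z t) * (∑ w ∈ B, e w t) * (2 * M) := by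
      have hFb : ∀ z ∈ A, ∀ w ∈ B, |F z w| ≤ e z t * e w t * (2 * M) := by
        intro z hz w hw
        have hdz : |d z| ≤ M := hM z (Finset.filter_subset _ _ hz)
        have hdw : |d w| ≤ M := hM w (Finset.filter_subset _ _ hw)
        have h1 : |d z - d w| ≤ 2 * M := by
          calc |d z - d w| ≤ |d z| + |d w| := abs_sub _ _
            _ ≤ 2 * M := by linarith
        simp only [hF]
        rw [abs_mul, abs_mul, abs_of_pos (hepos z t), abs_of_pos (hepos w t)]
        exact mul_le_mul_of_nonneg_left h1 (by positivity)
      calc |∑ z ∈ A, ∑ w ∈ B, F z w| ≤ ∑ z ∈ A, |∑ w ∈ B, F z w| :=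
            Finset.abs_sum_le_sum_abs _ _
        _ ≤ ∑ z ∈ A, ∑ w ∈ B, |F z w| :=
            Finset.sum_le_sum fun z _ => Finset.abs_sum_le_sum_abs _ _
        _ ≤ ∑ z ∈ A, ∑ w ∈ B, e z t * e w t * (2 * M) :=
            Finset.sum_le_sum fun z hz => Finset.sum_le_sum fun w hw => hFb z hz w hw
        _ = (∑ z ∈ A, e z t) * (∑ w ∈ B, e w t) * (2 * M) := by
            rw [Finset.sum_mul, Finset.sum_mul]
            refine Finset.sum_congr rfl fun z _ => ?_
            rw [Finset.mul_sum, Finset.sum_mul]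
    have hQb : |∑ z ∈ X, ∑ w ∈ X, s z * F z w| ≤ M * S t ^ 2 := by
      rw [hQ, abs_mul, abs_of_pos (by norm_num : (0:ℝ) < 2)]
      have h4 : 4 * ((∑ z ∈ A, e z t) * (∑ w ∈ B, e w t)) ≤ S t ^ 2 := by
        nlinarith [sq_nonneg ((∑ z ∈ A, e z t) - ∑ z ∈ B, e z t)]
      nlinarith [hQAB, abs_nonneg (∑ z ∈ A, ∑ w ∈ B, F z w)]
    simp only [hg', hnum]
    rw [abs_div, abs_mul, abs_of_pos hc, abs_of_pos (pow_pos (hSpos t) 2)]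
    rw [div_le_iff₀ (pow_pos (hSpos t) 2)]
    calc c * |∑ z ∈ X, ∑ w ∈ X, s z * F z w| ≤ c * (M * S t ^ 2) :=
          mul_le_mul_of_nonneg_left hQb hc.le
      _ = c * M * S t ^ 2 := by ring
  -- mean value inequality
  have hmvt : ‖g 1 - g 0‖ ≤ c * M * ‖(1:ℝ) - 0‖ := by
    refine Convex.norm_image_sub_le_of_norm_hasDerivWithin_le
      (f' := g') (fun t _ => (hgd t).hasDerivWithinAt)
      (fun t _ => by simpa using hbound t) convex_univ (Set.mem_univ 0) (Set.mem_univ 1)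
  -- identify g 1 and g 0
  have harg1 : ∀ z : EuclideanSpace ℝ (Fin k), y z + (1:ℝ) * d z = x z := fun z => by
    simp [hd]
  have harg0 : ∀ z : EuclideanSpace ℝ (Fin k), y z + (0:ℝ) * d z = y z := fun z => by
    simp
  have hg1 : g 1 = ∑ z ∈ X, s z * smx X c x z := by
    simp only [hg, hN, hS, he, smx, harg1]
    rw [Finset.sum_div]
    exact Finset.sum_congr rfl fun z _ => by rw [mul_div_assoc]
  have hg0 : g 0 = ∑ z ∈ X, s z * smx X c y z := by
    simp only [hg, hN, hS, he, smx, harg0]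
    rw [Finset.sum_div]
    exact Finset.sum_congr rfl fun z _ => by rw [mul_div_assoc]
  have hkey : ∑ z ∈ X, |smx X c x z - smx X c y z| = g 1 - g 0 := by
    rw [hg1, hg0, ← Finset.sum_sub_distrib]
    refine Finset.sum_congr rfl fun z _ => ?_
    rw [← mul_sub]
    by_cases h : 0 ≤ smx X c x z - smx X c y z
    · rw [abs_of_nonneg h]; simp only [hs]; rw [if_pos h, one_mul]
    · rw [abs_of_neg (lt_of_not_ge h)]; simp only [hs]; rw [if_neg h]; ring
  rw [hkey]
  calc g 1 - g 0 ≤ |g 1 - g 0| := le_abs_self _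
    _ ≤ c * M * ‖(1:ℝ) - 0‖ := hmvt
    _ = c * M := by norm_num

/-- `W₁(softmax_c(x), softmax_c(y)) ≤ (diam(X) √n c / 2) ‖x - y‖₂ ≤ (diam(X) n c / 2) ‖x - y‖_∞`
for vectors `x, y` indexed by the finite set `X ⊆ ℝᵏ` with `n = |X|`. -/
theorem stmt_14 {k : ℕ} (X : Finset (EuclideanSpace ℝ (Fin k))) (hX : X.Nonempty)
    (c : ℝ) (hc : 0 < c) (x y : EuclideanSpace ℝ (Fin k) → ℝ) :
    W1 X (fun u v => ‖u - v‖) (smx X c x) (smx X c y) ≤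
      sSup {r : ℝ | ∃ u ∈ X, ∃ v ∈ X, r = ‖u - v‖} * Real.sqrt X.card * c / 2 *
        Real.sqrt (∑ z ∈ X, (x z - y z) ^ 2) ∧
    sSup {r : ℝ | ∃ u ∈ X, ∃ v ∈ X, r = ‖u - v‖} * Real.sqrt X.card * c / 2 *
        Real.sqrt (∑ z ∈ X, (x z - y z) ^ 2) ≤
      sSup {r : ℝ | ∃ u ∈ X, ∃ v ∈ X, r = ‖u - v‖} * X.card * c / 2 *
        X.sup' hX (fun z => |x z - y z|) := by
  classical
  set D : ℝ := sSup {r : ℝ | ∃ u ∈ X, ∃ v ∈ X, r = ‖u - v‖} with hD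
  set M : ℝ := X.sup' hX (fun z => |x z - y z|) with hMdef
  set L : ℝ := Real.sqrt (∑ z ∈ X, (x z - y z) ^ 2) with hL
  have hL0 : 0 ≤ L := Real.sqrt_nonneg _
  have hbdd : BddAbove {r : ℝ | ∃ u ∈ X, ∃ v ∈ X, r = ‖u - v‖} := by
    apply Set.Finite.bddAbove
    apply Set.Finite.subset ((X ×ˢ X).finite_toSet.image fun p => ‖p.1 - p.2‖)
    rintro r ⟨u, hu, v, hv, rfl⟩
    exact ⟨(u, v), by simp [hu, hv], rfl⟩
  have hDle : ∀ u ∈ X, ∀ v ∈ X, ‖u - v‖ ≤ D :=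
    fun u hu v hv => le_csSup hbdd ⟨u, hu, v, hv, rfl⟩
  have hD0 : 0 ≤ D := by
    have := hDle hX.choose hX.choose_spec hX.choose hX.choose_spec
    simpa using le_trans (norm_nonneg _) this
  have hMle : ∀ z ∈ X, |x z - y z| ≤ M := fun z hz => by
    rw [hMdef]; exact Finset.le_sup' (fun z => |x z - y z|) hz
  have hM0 : 0 ≤ M := le_trans (abs_nonneg _) (hMle hX.choose hX.choose_spec)
  have hSxpos : 0 < ∑ w ∈ X, Real.exp (c * x w) :=
    Finset.sum_pos (fun w _ => Real.exp_pos _) hX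
  have hSypos : 0 < ∑ w ∈ X, Real.exp (c * y w) :=
    Finset.sum_pos (fun w _ => Real.exp_pos _) hX
  have hsum1x : ∑ z ∈ X, smx X c x z = 1 := by
    simp only [smx]
    rw [← Finset.sum_div, div_self (ne_of_gt hSxpos)]
  have hsum1y : ∑ z ∈ X, smx X c y z = 1 := by
    simp only [smx]
    rw [← Finset.sum_div, div_self (ne_of_gt hSypos)]
  have hnn : Real.sqrt (X.card : ℝ) * Real.sqrt (X.card : ℝ) = (X.card : ℝ) :=
    Real.mul_self_sqrt (Nat.cast_nonneg _)
  have h1le : (1 : ℝ) ≤ Real.sqrt (X.card : ℝ) := by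
    have h1 : (1 : ℝ) ≤ (X.card : ℝ) := by exact_mod_cast hX.card_pos
    nlinarith [Real.sqrt_nonneg (X.card : ℝ)]
  have hML : M ≤ L := by
    obtain ⟨z₀, hz₀, hz₀e⟩ := Finset.exists_mem_eq_sup' hX (fun z => |x z - y z|)
    rw [hMdef, hz₀e, ← Real.sqrt_sq_eq_abs, hL]
    exact Real.sqrt_le_sqrt (Finset.single_le_sum (fun z _ => sq_nonneg (x z - y z)) hz₀)
  have hLn : L ≤ Real.sqrt (X.card : ℝ) * M := by
    have h1 : ∑ z ∈ X, (x z - y z) ^ 2 ≤ (X.card : ℝ) * M ^ 2 := by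
      calc ∑ z ∈ X, (x z - y z) ^ 2 ≤ ∑ z ∈ X, M ^ 2 := by
            refine Finset.sum_le_sum fun z hz => ?_
            have := hMle z hz
            nlinarith [abs_nonneg (x z - y z), sq_abs (x z - y z)]
        _ = (X.card : ℝ) * M ^ 2 := by rw [Finset.sum_const, nsmul_eq_mul]
    calc L ≤ Real.sqrt ((X.card : ℝ) * M ^ 2) := Real.sqrt_le_sqrt h1
      _ = Real.sqrt (X.card : ℝ) * M := by
          rw [Real.sqrt_mul (Nat.cast_nonneg _), Real.sqrt_sq hM0]
  constructor
  · have hW : W1 X (fun u v => ‖u - v‖) (smx X c x) (smx X c y) ≤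
        D / 2 * ∑ z ∈ X, |smx X c x z - smx X c y z| :=
      W1_le_diam X (fun u v => ‖u - v‖) (fun u v => norm_nonneg _)
        (fun u => by simp) D hDle (smx X c x) (smx X c y)
        (fun z => div_nonneg (Real.exp_pos _).le hSxpos.le)
        (fun z => div_nonneg (Real.exp_pos _).le hSypos.le) hsum1x hsum1y
    have hlip : ∑ z ∈ X, |smx X c x z - smx X c y z| ≤ c * M :=
      smx_l1_lip X hX c hc x y M hMle
    have h2 : W1 X (fun u v => ‖u - v‖) (smx X c x) (smx X c y) ≤ D / 2 * (c * M) :=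
      le_trans hW (mul_le_mul_of_nonneg_left hlip (by linarith))
    refine le_trans h2 ?_
    have hML' : 0 ≤ D * c * (L - M) :=
      mul_nonneg (mul_nonneg hD0 hc.le) (by linarith)
    have haux : 0 ≤ D * c * ((Real.sqrt (X.card : ℝ) - 1) * L) :=
      mul_nonneg (mul_nonneg hD0 hc.le) (mul_nonneg (by linarith) hL0)
    nlinarith [hML', haux]
  · have haux : 0 ≤ D * Real.sqrt (X.card : ℝ) * c * (Real.sqrt (X.card : ℝ) * M - L) :=
      mul_nonneg (mul_nonneg (mul_nonneg hD0 (Real.sqrt_nonneg _)) hc.le) (by linarith)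
    have h6 : D * Real.sqrt (X.card : ℝ) * c * L
        ≤ D * Real.sqrt (X.card : ℝ) * c * (Real.sqrt (X.card : ℝ) * M) := by nlinarith [haux]
    have h7 : D * Real.sqrt (X.card : ℝ) * c * (Real.sqrt (X.card : ℝ) * M)
        = D * (X.card : ℝ) * c * M := by
      have h8 : D * Real.sqrt (X.card : ℝ) * c * (Real.sqrt (X.card : ℝ) * M)
          = D * (Real.sqrt (X.card : ℝ) * Real.sqrt (X.card : ℝ)) * c * M := by ring
      rw [h8, hnn]
    linarith [h6, h7]
end
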